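/- Under the hypotheses of the previous compactness result, the solution map is continuous: if (x_n, λ_n) → (x₀, λ₀) in E × [0,1], then the mild solutions u(·; x_n, λ_n) converge to u(·; x₀, λ₀) in C([0,T], E). -/

import Mathlib

open Bornology Set

/-- Hausdorff measure of noncompactness. -/
noncomputable def hmnc {E : Type*} [NormedAddCommGroup E] (Ω : Set E) : ℝ :=
  sInf {r : ℝ | 0 < r ∧ ∃ S : Finset E, Ω ⊆ ⋃ x ∈ S, Metric.ball x r}

open Set Filter MeasureTheory intervalIntegral Topology

set_option linter.unusedSectionVars false
set_option linter.unusedVariables false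
set_option maxHeartbeats 1600000

section Aux

/-- Integral form of Gronwall's inequality. -/
lemma gronwall_int {ρ : ℝ → ℝ} {b a L : ℝ} (hb : 0 ≤ b) (hL : 0 ≤ L)
    (hρ : ContinuousOn ρ (Icc 0 b))
    (h : ∀ t ∈ Icc 0 b, ρ t ≤ a + L * ∫ τ in (0:ℝ)..t, ρ τ) :
    ∀ t ∈ Icc 0 b, ρ t ≤ a * Real.exp (L * t) := by
  set ρ' : ℝ → ℝ := fun τ => ρ (max 0 (min τ b)) with hρ'def
  have hmem : ∀ τ : ℝ, max 0 (min τ b) ∈ Icc 0 b := fun τ =>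
    ⟨le_max_left _ _, max_le hb (min_le_right _ _)⟩
  have hρ'c : Continuous ρ' :=
    hρ.comp_continuous (continuous_const.max (continuous_id.min continuous_const)) hmem
  have hagree : ∀ τ ∈ Icc 0 b, ρ' τ = ρ τ := by
    intro τ hτ
    simp only [hρ'def, min_eq_left hτ.2, max_eq_right hτ.1]
  set G : ℝ → ℝ := fun t => a + L * ∫ τ in (0:ℝ)..t, ρ' τ with hGdef
  have hG : ∀ t : ℝ, HasDerivAt G (L * ρ' t) t := by
    intro t
    have h1 : HasDerivAt (fun u => ∫ τ in (0:ℝ)..u, ρ' τ) (ρ' t) t :=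
      integral_hasDerivAt_right (hρ'c.intervalIntegrable _ _)
        (hρ'c.stronglyMeasurable.stronglyMeasurableAtFilter) hρ'c.continuousAt
    exact (h1.const_mul L).const_add a
  have hint : ∀ t ∈ Icc 0 b, (∫ τ in (0:ℝ)..t, ρ τ) = ∫ τ in (0:ℝ)..t, ρ' τ := by
    intro t ht
    apply integral_congr
    intro τ hτ
    rw [uIcc_of_le ht.1] at hτ
    exact (hagree τ ⟨hτ.1, hτ.2.trans ht.2⟩).symm
  have key : ∀ t ∈ Icc 0 b, G t ≤ gronwallBound a L 0 (t - 0) := by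
    apply le_gronwallBound_of_liminf_deriv_right_le (f' := fun t => L * ρ' t)
    · exact fun t _ => (hG t).continuousAt.continuousWithinAt
    · intro x _ r hr
      have hten : Tendsto (slope G x) (𝓝[>] x) (𝓝 (L * ρ' x)) :=
        ((hasDerivAt_iff_tendsto_slope).1 (hG x)).mono_left
          (nhdsWithin_mono _ (fun z hz => ne_of_gt hz))
      have : ∀ᶠ z in 𝓝[>] x, slope G x z < r := hten.eventually (eventually_lt_nhds hr)
      refine this.frequently.mono ?_
      intro z hz
      simpa [slope_def_field, div_eq_inv_mul] using hz
    · simp [hGdef]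
    · intro x hx
      have : ρ' x ≤ G x := by
        rw [hagree x ⟨hx.1, hx.2.le⟩]
        show ρ x ≤ a + L * ∫ τ in (0:ℝ)..x, ρ' τ
        rw [← hint x ⟨hx.1, hx.2.le⟩]
        exact h x ⟨hx.1, hx.2.le⟩
      have := mul_le_mul_of_nonneg_left this hL
      linarith
  intro t ht
  calc ρ t ≤ G t := by
        show ρ t ≤ a + L * ∫ τ in (0:ℝ)..t, ρ' τ
        rw [← hint t ht]; exact h t ht
  _ ≤ gronwallBound a L 0 (t - 0) := key t ht
  _ = a * Real.exp (L * t) := by rw [sub_zero, gronwallBound_ε0]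

variable {E : Type*} [NormedAddCommGroup E] [NormedSpace ℝ E] [CompleteSpace E]

lemma sg_unif (S : ℝ → ℝ → E →L[ℝ] E)
    (hsg1 : ∀ l ∈ Icc (0:ℝ) 1, S l 0 = ContinuousLinearMap.id ℝ E)
    (hsg2 : ∀ l ∈ Icc (0:ℝ) 1, ∀ s ≥ (0:ℝ), ∀ t ≥ (0:ℝ), S l (s + t) = (S l s).comp (S l t))
    (hsgc : ∀ l ∈ Icc (0:ℝ) 1, ∀ x : E, ContinuousOn (fun t => S l t x) (Ici 0))
    (hcontr : ∀ l ∈ Icc (0:ℝ) 1, ∀ t ≥ (0:ℝ), ∀ z : E, ‖S l t z‖ ≤ ‖z‖)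
    (hresc : ∀ t ≥ (0:ℝ), ∀ x : E, ContinuousOn (fun l => S l t x) (Icc 0 1))
    (T : ℝ) (hT : 0 < T)
    (ls : ℕ → ℝ) (hls : ∀ n, ls n ∈ Icc (0:ℝ) 1) (l₀ : ℝ) (hl₀ : l₀ ∈ Icc (0:ℝ) 1)
    (hlt : Filter.Tendsto ls Filter.atTop (𝓝 l₀)) (y : E) :
    ∀ ε > (0:ℝ), ∀ᶠ n in Filter.atTop, ∀ t ∈ Icc (0:ℝ) T,
      ‖S (ls n) t y - S l₀ t y‖ < ε := by
  intro ε hε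
  -- Step 1: choose δ with ‖S l₀ s y - y‖ ≤ ε/8 on [0, δ]
  have hcwa : ContinuousWithinAt (fun s => S l₀ s y) (Ici 0) 0 :=
    (hsgc l₀ hl₀ y).continuousWithinAt (self_mem_Ici)
  have h0 : S l₀ 0 y = y := by rw [hsg1 l₀ hl₀]; rfl
  obtain ⟨δ', hδ', hδ'prop⟩ := Metric.continuousWithinAt_iff.1 hcwa (ε/9) (by linarith)
  set δ := δ'/2 with hδdef
  have hδpos : 0 < δ := by positivity
  have hδsmall : ∀ s ∈ Icc (0:ℝ) δ, ‖S l₀ s y - y‖ ≤ ε/8 := by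
    intro s hs
    have h1 : dist s 0 < δ' := by
      rw [Real.dist_eq, sub_zero, abs_of_nonneg hs.1]; linarith [hs.2]
    have := hδ'prop hs.1 h1
    rw [dist_eq_norm, h0] at this
    linarith
  -- notation
  set g : ℕ → ℝ → ℝ := fun n s => ‖S (ls n) s y - S l₀ s y‖ with hgdef
  have hgcont : ∀ n, ContinuousOn (g n) (Ici 0) := fun n =>
    (((hsgc _ (hls n) y).sub (hsgc l₀ hl₀ y)).norm)
  have hgnonneg : ∀ n s, 0 ≤ g n s := fun n s => norm_nonneg _
  have hgInt : ∀ n, ∀ b ≥ (0:ℝ), IntervalIntegrable (g n) volume 0 b := by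
    intro n b hb
    apply ContinuousOn.intervalIntegrable
    rw [uIcc_of_le hb]
    exact (hgcont n).mono (Icc_subset_Ici_self)
  have hSyInt : ∀ l ∈ Icc (0:ℝ) 1, ∀ a b : ℝ, 0 ≤ a → a ≤ b →
      IntervalIntegrable (fun s => S l s y) volume a b := by
    intro l hl a b ha hab
    apply ContinuousOn.intervalIntegrable
    rw [uIcc_of_le hab]
    exact (hsgc l hl y).mono (fun x hx => le_trans ha hx.1)
  -- Step 2: Iₙ → 0
  set I : ℕ → ℝ := fun n => ∫ s in (0:ℝ)..(T+δ), g n s with hIdef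
  have hTδ : (0:ℝ) ≤ T + δ := by linarith
  have hI : Tendsto I atTop (𝓝 0) := by
    have := intervalIntegral.tendsto_integral_filter_of_dominated_convergence
        (μ := volume) (a := (0:ℝ)) (b := T + δ) (F := g) (f := fun _ => (0:ℝ))
        (fun _ => 2 * ‖y‖)
        (Eventually.of_forall (fun n => by
          apply ContinuousOn.aestronglyMeasurable _ measurableSet_uIoc
          rw [uIoc_of_le hTδ]
          exact (hgcont n).mono (fun x hx => hx.1.le)))
        (Eventually.of_forall (fun n => by
          filter_upwards with x hx
          rw [uIoc_of_le hTδ] at hx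
          have h1 : ‖S (ls n) x y‖ ≤ ‖y‖ := hcontr _ (hls n) x hx.1.le y
          have h2 : ‖S l₀ x y‖ ≤ ‖y‖ := hcontr _ hl₀ x hx.1.le y
          have : g n x ≤ 2 * ‖y‖ := by
            calc g n x ≤ ‖S (ls n) x y‖ + ‖S l₀ x y‖ := norm_sub_le _ _
            _ ≤ 2 * ‖y‖ := by linarith
          calc ‖g n x‖ = g n x := Real.norm_of_nonneg (hgnonneg n x)
          _ ≤ 2 * ‖y‖ := this))
        (intervalIntegrable_const)
        (by
          filter_upwards with x hx
          rw [uIoc_of_le hTδ] at hx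
          have hx0 : (0:ℝ) ≤ x := hx.1.le
          have hcl : ContinuousWithinAt (fun l => S l x y) (Icc 0 1) l₀ :=
            (hresc x hx0 y).continuousWithinAt hl₀
          have hlt' : Tendsto ls atTop (𝓝[Icc (0:ℝ) 1] l₀) :=
            tendsto_nhdsWithin_iff.2 ⟨hlt, Eventually.of_forall hls⟩
          have hvec : Tendsto (fun n => S (ls n) x y - S l₀ x y) atTop (𝓝 0) := by
            have := hcl.tendsto.comp hlt'
            simpa using this.sub (tendsto_const_nhds (x := S l₀ x y))
          exact tendsto_zero_iff_norm_tendsto_zero.1 hvec)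
    simpa using this
  -- Step 3: eventually Iₙ < δ * ε / 8, and conclude
  have hev : ∀ᶠ n in atTop, I n < δ * ε / 8 :=
    hI.eventually (eventually_lt_nhds (by positivity))
  filter_upwards [hev] with n hI_n
  intro t ht
  set l := ls n with hldef
  have hl : l ∈ Icc (0:ℝ) 1 := hls n
  -- mollified vectors
  set yn : E := δ⁻¹ • ∫ s in (0:ℝ)..δ, S l s y with hyndef
  set y0 : E := δ⁻¹ • ∫ s in (0:ℝ)..δ, S l₀ s y with hy0def
  have hInonneg : 0 ≤ I n := by
    rw [hIdef]
    apply intervalIntegral.integral_nonneg hTδ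
    intro s _; exact hgnonneg n s
  -- (ii') ∫₀^δ g ≤ Iₙ  and ∫_t^{t+δ} g ≤ Iₙ
  have hsub : ∀ a b : ℝ, 0 ≤ a → a ≤ b → b ≤ T + δ →
      (∫ s in a..b, g n s) ≤ I n := by
    intro a b ha hab hb
    apply intervalIntegral.integral_mono_interval ha hab hb
    · filter_upwards with s; exact hgnonneg n s
    · exact hgInt n (T+δ) hTδ
  -- (i) ‖y - y0‖ ≤ ε/8
  have hyy0 : ‖y - y0‖ ≤ ε/8 := by
    have heq : y - y0 = δ⁻¹ • ∫ s in (0:ℝ)..δ, (y - S l₀ s y) := by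
      rw [intervalIntegral.integral_sub (intervalIntegrable_const)
        (hSyInt l₀ hl₀ 0 δ le_rfl hδpos.le), intervalIntegral.integral_const,
        smul_sub, sub_zero, smul_smul, inv_mul_cancel₀ hδpos.ne', one_smul, hy0def]
    rw [heq, norm_smul, norm_inv, Real.norm_of_nonneg hδpos.le]
    have h1 : ‖∫ s in (0:ℝ)..δ, (y - S l₀ s y)‖ ≤ ∫ s in (0:ℝ)..δ, ‖y - S l₀ s y‖ :=
      intervalIntegral.norm_integral_le_integral_norm hδpos.le
    have h2 : (∫ s in (0:ℝ)..δ, ‖y - S l₀ s y‖) ≤ ∫ s in (0:ℝ)..δ, (ε/8) := by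
      apply intervalIntegral.integral_mono_on hδpos.le
      · apply ContinuousOn.intervalIntegrable
        rw [uIcc_of_le hδpos.le]
        exact ((continuousOn_const.sub ((hsgc l₀ hl₀ y).mono Icc_subset_Ici_self)).norm)
      · exact intervalIntegrable_const
      · intro s hs
        rw [norm_sub_rev]
        exact hδsmall s hs
    rw [intervalIntegral.integral_const, sub_zero, smul_eq_mul] at h2
    calc δ⁻¹ * ‖∫ s in (0:ℝ)..δ, (y - S l₀ s y)‖ ≤ δ⁻¹ * (δ * (ε/8)) := by
          apply mul_le_mul_of_nonneg_left (h1.trans h2) (by positivity)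
    _ = ε/8 := by field_simp
  -- (ii) ‖y0 - yn‖ ≤ δ⁻¹ * I n
  have hy0yn : ‖y0 - yn‖ ≤ δ⁻¹ * I n := by
    have heq : y0 - yn = δ⁻¹ • ∫ s in (0:ℝ)..δ, (S l₀ s y - S l s y) := by
      rw [intervalIntegral.integral_sub (hSyInt l₀ hl₀ 0 δ le_rfl hδpos.le)
        (hSyInt l hl 0 δ le_rfl hδpos.le), smul_sub, hy0def, hyndef]
    rw [heq, norm_smul, norm_inv, Real.norm_of_nonneg hδpos.le]
    apply mul_le_mul_of_nonneg_left _ (by positivity)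
    calc ‖∫ s in (0:ℝ)..δ, (S l₀ s y - S l s y)‖
        ≤ ∫ s in (0:ℝ)..δ, ‖S l₀ s y - S l s y‖ :=
          intervalIntegral.norm_integral_le_integral_norm hδpos.le
    _ = ∫ s in (0:ℝ)..δ, g n s := by
          apply intervalIntegral.integral_congr
          intro s _; rw [hgdef]; exact norm_sub_rev _ _
    _ ≤ I n := hsub 0 δ le_rfl hδpos.le (by linarith [ht.2])
  -- (iii) ‖S l t yn - S l₀ t y0‖ ≤ δ⁻¹ * I n
  have ht0 : (0:ℝ) ≤ t := ht.1
  have hmoll : ∀ l' , l' ∈ Icc (0:ℝ) 1 →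
      S l' t (δ⁻¹ • ∫ s in (0:ℝ)..δ, S l' s y) = δ⁻¹ • ∫ s in t..(t+δ), S l' s y := by
    intro l' hl'
    rw [(S l' t).map_smul]
    congr 1
    rw [← ContinuousLinearMap.intervalIntegral_comp_comm _ (hSyInt l' hl' 0 δ le_rfl hδpos.le)]
    have hcong : (∫ s in (0:ℝ)..δ, S l' t (S l' s y)) = ∫ s in (0:ℝ)..δ, S l' (t + s) y := by
      apply intervalIntegral.integral_congr
      intro s hs
      rw [uIcc_of_le hδpos.le] at hs
      show S l' t (S l' s y) = S l' (t + s) y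
      rw [hsg2 l' hl' t ht0 s hs.1]
      rfl
    rw [hcong]
    have := intervalIntegral.integral_comp_add_left (a := (0:ℝ)) (b := δ)
      (fun s => S l' s y) t
    simpa using this
  have hmid : ‖S l t yn - S l₀ t y0‖ ≤ δ⁻¹ * I n := by
    rw [hyndef, hy0def, hmoll l hl, hmoll l₀ hl₀, ← smul_sub, norm_smul, norm_inv,
      Real.norm_of_nonneg hδpos.le]
    apply mul_le_mul_of_nonneg_left _ (by positivity)
    rw [← intervalIntegral.integral_sub (hSyInt l hl t (t+δ) ht0 (by linarith))
      (hSyInt l₀ hl₀ t (t+δ) ht0 (by linarith))]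
    calc ‖∫ s in t..(t+δ), (S l s y - S l₀ s y)‖
        ≤ ∫ s in t..(t+δ), g n s :=
          intervalIntegral.norm_integral_le_integral_norm (by linarith)
    _ ≤ I n := hsub t (t+δ) ht0 (by linarith) (by linarith [ht.2])
  -- (iv) conclusion
  have hsplit : S l t y - S l₀ t y =
      S l t (y - yn) + (S l t yn - S l₀ t y0) + S l₀ t (y0 - y) := by
    rw [map_sub, map_sub]
    abel
  have h1 : ‖S l t (y - yn)‖ ≤ ‖y - yn‖ := hcontr l hl t ht0 _
  have h2 : ‖S l₀ t (y0 - y)‖ ≤ ‖y0 - y‖ := hcontr l₀ hl₀ t ht0 _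
  have h3 : ‖y - yn‖ ≤ ε/8 + δ⁻¹ * I n := by
    calc ‖y - yn‖ ≤ ‖y - y0‖ + ‖y0 - yn‖ := by
          have := norm_add_le (y - y0) (y0 - yn); simpa using this
    _ ≤ ε/8 + δ⁻¹ * I n := add_le_add hyy0 hy0yn
  have h4 : ‖y0 - y‖ ≤ ε/8 := by rw [norm_sub_rev]; exact hyy0
  have hIn' : δ⁻¹ * I n < ε/8 := by
    have := mul_lt_mul_of_pos_left hI_n (inv_pos.2 hδpos)
    calc δ⁻¹ * I n < δ⁻¹ * (δ * ε / 8) := this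
    _ = ε/8 := by field_simp
  calc ‖S l t y - S l₀ t y‖
      ≤ ‖S l t (y - yn)‖ + ‖S l t yn - S l₀ t y0‖ + ‖S l₀ t (y0 - y)‖ := by
        rw [hsplit]; exact norm_add₃_le
  _ ≤ (ε/8 + δ⁻¹ * I n) + δ⁻¹ * I n + ε/8 :=
        add_le_add (add_le_add (h1.trans h3) hmid) (h2.trans h4)
  _ < (ε/8 + ε/8) + ε/8 + ε/8 := by linarith
  _ < ε := by linarith


lemma sg_unif_compact (S : ℝ → ℝ → E →L[ℝ] E)
    (hcontr : ∀ l ∈ Icc (0:ℝ) 1, ∀ t ≥ (0:ℝ), ∀ z : E, ‖S l t z‖ ≤ ‖z‖)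
    (T : ℝ)
    (ls : ℕ → ℝ) (l₀ : ℝ)
    (hA : ∀ y : E, ∀ ε > (0:ℝ), ∀ᶠ n in Filter.atTop, ∀ t ∈ Icc (0:ℝ) T,
      ‖S (ls n) t y - S l₀ t y‖ < ε)
    (hls : ∀ n, ls n ∈ Icc (0:ℝ) 1) (hl₀ : l₀ ∈ Icc (0:ℝ) 1)
    (K : Set E) (hK : IsCompact K) :
    ∀ ε > (0:ℝ), ∀ᶠ n in Filter.atTop, ∀ t ∈ Icc (0:ℝ) T, ∀ y ∈ K,
      ‖S (ls n) t y - S l₀ t y‖ < ε := by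
  intro ε hε
  obtain ⟨P, hP⟩ := hK.elim_finite_subcover (fun z : E => Metric.ball z (ε/4))
    (fun z => Metric.isOpen_ball)
    (fun z hz => mem_iUnion.2 ⟨z, Metric.mem_ball_self (by linarith)⟩)
  have hev : ∀ᶠ n in Filter.atTop, ∀ z ∈ P, ∀ t ∈ Icc (0:ℝ) T,
      ‖S (ls n) t z - S l₀ t z‖ < ε/4 :=
    (Filter.eventually_all_finset P).2 (fun z _ => hA z (ε/4) (by linarith))
  filter_upwards [hev] with n hn
  intro t ht y hy
  obtain ⟨z, hzP, hyz⟩ : ∃ z ∈ P, y ∈ Metric.ball z (ε/4) := by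
    have := hP hy
    rw [mem_iUnion₂] at this
    obtain ⟨z, hz1, hz2⟩ := this
    exact ⟨z, hz1, hz2⟩
  have hyz' : ‖y - z‖ < ε/4 := by rwa [← dist_eq_norm, ← Metric.mem_ball]
  have hsplit : S (ls n) t y - S l₀ t y =
      S (ls n) t (y - z) + (S (ls n) t z - S l₀ t z) + S l₀ t (z - y) := by
    rw [map_sub, map_sub]; abel
  have h1 : ‖S (ls n) t (y - z)‖ ≤ ‖y - z‖ := hcontr _ (hls n) t ht.1 _
  have h2 : ‖S l₀ t (z - y)‖ ≤ ‖z - y‖ := hcontr _ hl₀ t ht.1 _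
  have h3 : ‖z - y‖ < ε/4 := by rwa [norm_sub_rev]
  calc ‖S (ls n) t y - S l₀ t y‖
      ≤ ‖S (ls n) t (y - z)‖ + ‖S (ls n) t z - S l₀ t z‖ + ‖S l₀ t (z - y)‖ := by
        rw [hsplit]; exact norm_add₃_le
  _ < ε/4 + ε/4 + ε/4 := by
        have := hn z hzP t ht
        have h4 := h1.trans_lt hyz'
        have h5 := h2.trans_lt h3
        linarith
  _ < ε := by linarith

lemma cont_comp (S : ℝ → ℝ → E →L[ℝ] E)
    (hsgc : ∀ l ∈ Icc (0:ℝ) 1, ∀ x : E, ContinuousOn (fun t => S l t x) (Ici 0))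
    (hcontr : ∀ l ∈ Icc (0:ℝ) 1, ∀ t ≥ (0:ℝ), ∀ z : E, ‖S l t z‖ ≤ ‖z‖)
    {l : ℝ} (hl : l ∈ Icc (0:ℝ) 1) {t : ℝ} (ht : 0 ≤ t) {f : ℝ → E}
    (hf : ContinuousOn f (Icc 0 t)) :
    ContinuousOn (fun τ => S l (t - τ) (f τ)) (Icc 0 t) := by
  intro τ₀ hτ₀
  have hmap : MapsTo (fun τ => t - τ) (Icc 0 t) (Ici (0:ℝ)) := by
    intro τ hτ
    simp only [mem_Ici]
    linarith [hτ.2]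
  have h2 : ContinuousWithinAt (fun τ => S l (t - τ) (f τ₀)) (Icc 0 t) τ₀ :=
    ((hsgc l hl (f τ₀)).comp
      ((continuous_const.sub continuous_id).continuousOn) hmap) τ₀ hτ₀
  have h1 : Tendsto (fun τ => S l (t - τ) (f τ - f τ₀)) (𝓝[Icc 0 t] τ₀) (𝓝 0) := by
    apply squeeze_zero_norm' (a := fun τ => ‖f τ - f τ₀‖)
    · filter_upwards [eventually_mem_nhdsWithin] with τ hτ
      exact hcontr l hl (t - τ) (by linarith [hτ.2]) _
    · have : Tendsto (fun τ => f τ - f τ₀) (𝓝[Icc 0 t] τ₀) (𝓝 0) := by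
        have := (hf τ₀ hτ₀).tendsto
        simpa using this.sub (tendsto_const_nhds (x := f τ₀))
      exact tendsto_zero_iff_norm_tendsto_zero.1 this
  have heq : (fun τ => S l (t - τ) (f τ)) =
      fun τ => S l (t - τ) (f τ - f τ₀) + S l (t - τ) (f τ₀) := by
    funext τ
    rw [← map_add]
    congr 1
    abel
  rw [ContinuousWithinAt, heq]
  have := h1.add h2.tendsto
  simpa using this

lemma unif_lip (F : ℝ → E → ℝ → E) (T : ℝ)
    (hFl : ∀ x : E, ∃ δ > (0:ℝ), ∃ L > (0:ℝ), ∀ x₁ ∈ Metric.ball x δ,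
      ∀ x₂ ∈ Metric.ball x δ, ∀ t ∈ Icc (0:ℝ) T, ∀ l ∈ Icc (0:ℝ) 1,
        ‖F t x₁ l - F t x₂ l‖ ≤ L * ‖x₁ - x₂‖)
    (K : Set E) (hK : IsCompact K) (hne : K.Nonempty) :
    ∃ δ > (0:ℝ), ∃ L > (0:ℝ), ∀ p ∈ K, ∀ x₁ ∈ Metric.ball p δ, ∀ x₂ ∈ Metric.ball p δ,
      ∀ t ∈ Icc (0:ℝ) T, ∀ l ∈ Icc (0:ℝ) 1, ‖F t x₁ l - F t x₂ l‖ ≤ L * ‖x₁ - x₂‖ := by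
  choose δf hδf Lf hLf hlip using hFl
  obtain ⟨P, hP⟩ := hK.elim_finite_subcover (fun p : E => Metric.ball p (δf p / 2))
    (fun p => Metric.isOpen_ball)
    (fun p hp => mem_iUnion.2 ⟨p, Metric.mem_ball_self (by linarith [hδf p])⟩)
  have hPne : P.Nonempty := by
    obtain ⟨p₀, hp₀⟩ := hne
    have := hP hp₀
    rw [mem_iUnion₂] at this
    obtain ⟨q, hq, _⟩ := this
    exact ⟨q, hq⟩
  refine ⟨P.inf' hPne (fun p => δf p / 2), ?_, P.sup' hPne Lf, ?_, ?_⟩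
  · rw [gt_iff_lt, Finset.lt_inf'_iff]
    intro p _
    linarith [hδf p]
  · obtain ⟨q, hq⟩ := hPne
    exact lt_of_lt_of_le (hLf q) (Finset.le_sup' Lf hq)
  · intro p hp x₁ hx₁ x₂ hx₂ t ht l hl
    have hmem := hP hp
    rw [mem_iUnion₂] at hmem
    obtain ⟨q, hq, hpq⟩ := hmem
    have hinfle : P.inf' hPne (fun p => δf p / 2) ≤ δf q / 2 :=
      Finset.inf'_le _ hq
    have hdpq : dist p q < δf q / 2 := hpq
    have hx₁' : x₁ ∈ Metric.ball q (δf q) := by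
      rw [Metric.mem_ball]
      calc dist x₁ q ≤ dist x₁ p + dist p q := dist_triangle _ _ _
      _ < δf q / 2 + δf q / 2 := by
          have := Metric.mem_ball.1 hx₁
          exact add_lt_add_of_lt_of_lt (this.trans_le hinfle) hdpq
      _ = δf q := by ring
    have hx₂' : x₂ ∈ Metric.ball q (δf q) := by
      rw [Metric.mem_ball]
      calc dist x₂ q ≤ dist x₂ p + dist p q := dist_triangle _ _ _
      _ < δf q / 2 + δf q / 2 := by
          have := Metric.mem_ball.1 hx₂
          exact add_lt_add_of_lt_of_lt (this.trans_le hinfle) hdpq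
      _ = δf q := by ring
    calc ‖F t x₁ l - F t x₂ l‖ ≤ Lf q * ‖x₁ - x₂‖ := hlip q x₁ hx₁' x₂ hx₂' t ht l hl
    _ ≤ P.sup' hPne Lf * ‖x₁ - x₂‖ :=
        mul_le_mul_of_nonneg_right (Finset.le_sup' Lf hq) (norm_nonneg _)

end Aux
theorem stmt12 {E : Type*} [NormedAddCommGroup E] [NormedSpace ℝ E] [CompleteSpace E]
    [TopologicalSpace.SeparableSpace E]
    (S : ℝ → ℝ → E →L[ℝ] E) (ω : ℝ) (hω : 0 < ω)
    (hsg1 : ∀ l ∈ Set.Icc (0:ℝ) 1, S l 0 = ContinuousLinearMap.id ℝ E)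
    (hsg2 : ∀ l ∈ Set.Icc (0:ℝ) 1, ∀ s ≥ (0:ℝ), ∀ t ≥ (0:ℝ),
      S l (s + t) = (S l s).comp (S l t))
    (hsgc : ∀ l ∈ Set.Icc (0:ℝ) 1, ∀ x : E, ContinuousOn (fun t => S l t x) (Set.Ici 0))
    (hnorm : ∀ l ∈ Set.Icc (0:ℝ) 1, ∀ t ≥ (0:ℝ), ‖S l t‖ ≤ Real.exp (-ω * t))
    (hresc : ∀ t ≥ (0:ℝ), ∀ x : E, ContinuousOn (fun l => S l t x) (Set.Icc 0 1))
    (T : ℝ) (hT : 0 < T)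
    (F : ℝ → E → ℝ → E)
    (hFc : Continuous fun p : ℝ × E × ℝ => F p.1 p.2.1 p.2.2)
    (hFl : ∀ x : E, ∃ δ > (0:ℝ), ∃ L > (0:ℝ), ∀ x₁ ∈ Metric.ball x δ,
      ∀ x₂ ∈ Metric.ball x δ, ∀ t ∈ Set.Icc (0:ℝ) T, ∀ l ∈ Set.Icc (0:ℝ) 1,
        ‖F t x₁ l - F t x₂ l‖ ≤ L * ‖x₁ - x₂‖)
    (c : ℝ) (hc : 0 < c)
    (hFg : ∀ t ∈ Set.Icc (0:ℝ) T, ∀ x : E, ∀ l ∈ Set.Icc (0:ℝ) 1,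
      ‖F t x l‖ ≤ c * (1 + ‖x‖))
    (k : ℝ) (hk0 : 0 ≤ k) (hkω : k < ω)
    (hFk : ∀ Ω : Set E, IsBounded Ω →
      hmnc {y : E | ∃ t ∈ Set.Icc (0:ℝ) T, ∃ x ∈ Ω, ∃ l ∈ Set.Icc (0:ℝ) 1, y = F t x l}
        ≤ k * hmnc Ω)
    (sol : E → ℝ → ℝ → E)
    (hsolc : ∀ x : E, ∀ l ∈ Set.Icc (0:ℝ) 1, ContinuousOn (sol x l) (Set.Icc 0 T))
    (hmild : ∀ x : E, ∀ l ∈ Set.Icc (0:ℝ) 1, ∀ t ∈ Set.Icc (0:ℝ) T,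
      sol x l t = S l t x + ∫ τ in (0:ℝ)..t, S l (t - τ) (F τ (sol x l τ) l)) :
    ∀ (xs : ℕ → E) (ls : ℕ → ℝ) (x₀ : E) (l₀ : ℝ), (∀ n, ls n ∈ Set.Icc (0:ℝ) 1) →
      l₀ ∈ Set.Icc (0:ℝ) 1 →
      Filter.Tendsto xs Filter.atTop (nhds x₀) →
      Filter.Tendsto ls Filter.atTop (nhds l₀) →
      TendstoUniformlyOn (fun n t => sol (xs n) (ls n) t) (sol x₀ l₀)
        Filter.atTop (Set.Icc 0 T) := by
  intro xs ls x₀ l₀ hls hl₀ hxs hlst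
  -- contraction property
  have hcontr : ∀ l ∈ Set.Icc (0:ℝ) 1, ∀ t ≥ (0:ℝ), ∀ z : E, ‖S l t z‖ ≤ ‖z‖ := by
    intro l hl t ht z
    calc ‖S l t z‖ ≤ ‖S l t‖ * ‖z‖ := (S l t).le_opNorm z
    _ ≤ 1 * ‖z‖ := by
        apply mul_le_mul_of_nonneg_right _ (norm_nonneg z)
        refine (hnorm l hl t ht).trans (Real.exp_le_one_iff.2 ?_)
        nlinarith
    _ = ‖z‖ := one_mul _
  have hA := sg_unif S hsg1 hsg2 hsgc hcontr hresc T hT ls hls l₀ hl₀ hlst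
  -- base solution and compact sets
  have hu₀c : ContinuousOn (sol x₀ l₀) (Set.Icc 0 T) := hsolc x₀ l₀ hl₀
  have hK₀ : IsCompact (sol x₀ l₀ '' Set.Icc 0 T) :=
    isCompact_Icc.image_of_continuousOn hu₀c
  have hK₀ne : (sol x₀ l₀ '' Set.Icc 0 T).Nonempty :=
    ⟨sol x₀ l₀ 0, mem_image_of_mem _ (left_mem_Icc.2 hT.le)⟩
  obtain ⟨δs, hδs, Ls, hLs, hlip⟩ := unif_lip F T hFl _ hK₀ hK₀ne
  obtain ⟨zmax, hzmaxK, hzmax⟩ := hK₀.exists_isMaxOn hK₀ne continuous_norm.continuousOn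
  have hM₀ : ∀ τ ∈ Set.Icc (0:ℝ) T, ‖sol x₀ l₀ τ‖ ≤ ‖zmax‖ := fun τ hτ =>
    hzmax (mem_image_of_mem _ hτ)
  have hFu₀c : ContinuousOn (fun τ => F τ (sol x₀ l₀ τ) l₀) (Set.Icc 0 T) :=
    hFc.comp_continuousOn (continuousOn_id.prodMk (hu₀c.prodMk continuousOn_const))
  have hKF : IsCompact ((fun τ => F τ (sol x₀ l₀ τ) l₀) '' Set.Icc 0 T) :=
    isCompact_Icc.image_of_continuousOn hFu₀c
  rw [Metric.tendstoUniformlyOn_iff]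
  intro ε hε
  have hε₁ : 0 < min ε δs := lt_min hε hδs
  set ε₁ : ℝ := min ε δs with hε₁def
  set Cg : ℝ := Real.exp (Ls * T) with hCgdef
  have hCg : 1 ≤ Cg := Real.one_le_exp (by positivity)
  set b : ℝ := ε₁ / (4 * Cg) with hbdef
  have hb : 0 < b := by positivity
  have hbε₁ : b ≤ ε₁ / 4 := by
    rw [hbdef]
    rw [div_le_div_iff₀ (by positivity) (by norm_num)]
    nlinarith [hε₁.le, hCg]
  -- events
  have Ev1a : ∀ᶠ n in Filter.atTop, ‖xs n - x₀‖ < b/8 := by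
    have := hxs (Metric.ball_mem_nhds x₀ (show (0:ℝ) < b/8 by positivity))
    filter_upwards [this] with n hn
    have hn' : xs n ∈ Metric.ball x₀ (b/8) := hn
    rwa [Metric.mem_ball, dist_eq_norm] at hn'
  have Ev1b := hA x₀ (b/8) (by positivity)
  have Ev3 := sg_unif_compact S hcontr T ls l₀ hA hls hl₀ _ hKF (b/(4*(T+1)))
    (by positivity)
  have Ev2 : ∀ᶠ n in Filter.atTop,
      (∫ τ in (0:ℝ)..T, ‖F τ (sol x₀ l₀ τ) (ls n) - F τ (sol x₀ l₀ τ) l₀‖) < b/4 := by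
    have hφcont : ∀ l', ContinuousOn (fun τ => F τ (sol x₀ l₀ τ) l') (Set.Icc 0 T) :=
      fun l' => hFc.comp_continuousOn (continuousOn_id.prodMk (hu₀c.prodMk continuousOn_const))
    have htend : Filter.Tendsto
        (fun n => ∫ τ in (0:ℝ)..T, ‖F τ (sol x₀ l₀ τ) (ls n) - F τ (sol x₀ l₀ τ) l₀‖)
        Filter.atTop (𝓝 0) := by
      have key := intervalIntegral.tendsto_integral_filter_of_dominated_convergence
        (μ := volume) (a := (0:ℝ)) (b := T)
        (F := fun n τ => ‖F τ (sol x₀ l₀ τ) (ls n) - F τ (sol x₀ l₀ τ) l₀‖)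
        (f := fun _ => (0:ℝ)) (fun _ => 2 * (c * (1 + ‖zmax‖)))
        (Eventually.of_forall (fun n => by
          apply ContinuousOn.aestronglyMeasurable _ measurableSet_uIoc
          rw [uIoc_of_le hT.le]
          exact (((hφcont (ls n)).sub (hφcont l₀)).norm).mono
            (fun x hx => ⟨hx.1.le, hx.2⟩)))
        (Eventually.of_forall (fun n => by
          filter_upwards with τ hτ
          rw [uIoc_of_le hT.le] at hτ
          have hτ' : τ ∈ Set.Icc (0:ℝ) T := ⟨hτ.1.le, hτ.2⟩
          have h1 : ‖F τ (sol x₀ l₀ τ) (ls n)‖ ≤ c * (1 + ‖zmax‖) := by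
            refine (hFg τ hτ' _ _ (hls n)).trans ?_
            have := hM₀ τ hτ'
            nlinarith [hc]
          have h2 : ‖F τ (sol x₀ l₀ τ) l₀‖ ≤ c * (1 + ‖zmax‖) := by
            refine (hFg τ hτ' _ _ hl₀).trans ?_
            have := hM₀ τ hτ'
            nlinarith [hc]
          have h3 : ‖F τ (sol x₀ l₀ τ) (ls n) - F τ (sol x₀ l₀ τ) l₀‖
              ≤ 2 * (c * (1 + ‖zmax‖)) := by
            calc ‖F τ (sol x₀ l₀ τ) (ls n) - F τ (sol x₀ l₀ τ) l₀‖
                ≤ ‖F τ (sol x₀ l₀ τ) (ls n)‖ + ‖F τ (sol x₀ l₀ τ) l₀‖ := norm_sub_le _ _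
            _ ≤ 2 * (c * (1 + ‖zmax‖)) := by linarith
          calc ‖‖F τ (sol x₀ l₀ τ) (ls n) - F τ (sol x₀ l₀ τ) l₀‖‖
              = ‖F τ (sol x₀ l₀ τ) (ls n) - F τ (sol x₀ l₀ τ) l₀‖ :=
                Real.norm_of_nonneg (norm_nonneg _)
          _ ≤ 2 * (c * (1 + ‖zmax‖)) := h3))
        (intervalIntegrable_const)
        (by
          filter_upwards with τ hτ
          have hcl : Filter.Tendsto (fun l' => F τ (sol x₀ l₀ τ) l') (𝓝 l₀)
              (𝓝 (F τ (sol x₀ l₀ τ) l₀)) := by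
            have : Continuous (fun l' => F τ (sol x₀ l₀ τ) l') :=
              hFc.comp (continuous_const.prodMk
                (continuous_const.prodMk continuous_id))
            exact this.tendsto l₀
          have hvec : Filter.Tendsto
              (fun n => F τ (sol x₀ l₀ τ) (ls n) - F τ (sol x₀ l₀ τ) l₀)
              Filter.atTop (𝓝 0) := by
            have := hcl.comp hlst
            simpa using this.sub (tendsto_const_nhds (x := F τ (sol x₀ l₀ τ) l₀))
          exact tendsto_zero_iff_norm_tendsto_zero.1 hvec)
      simpa using key
    exact htend.eventually (eventually_lt_nhds (by positivity))
  filter_upwards [Ev1a, Ev1b, Ev2, Ev3] with n h1a h1b h2 h3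
  intro t ht
  -- per-n setup
  have hunc : ContinuousOn (sol (xs n) (ls n)) (Set.Icc 0 T) := hsolc _ _ (hls n)
  set ρ : ℝ → ℝ := fun τ => ‖sol (xs n) (ls n) τ - sol x₀ l₀ τ‖ with hρdef
  have hρc : ContinuousOn ρ (Set.Icc 0 T) := (hunc.sub hu₀c).norm
  -- core integral inequality
  have hcore : ∀ t₁ ∈ Set.Icc (0:ℝ) T, (∀ τ ∈ Set.Icc (0:ℝ) t₁, ρ τ ≤ ε₁/2) →
      ∀ t' ∈ Set.Icc (0:ℝ) t₁, ρ t' ≤ 3*b/4 + Ls * ∫ τ in (0:ℝ)..t', ρ τ := by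
    intro t₁ ht₁ hsm t' ht'
    have ht'T : t' ∈ Set.Icc (0:ℝ) T := ⟨ht'.1, ht'.2.trans ht₁.2⟩
    have ht'0 : (0:ℝ) ≤ t' := ht'.1
    have hsubT : Set.Icc (0:ℝ) t' ⊆ Set.Icc (0:ℝ) T := Icc_subset_Icc le_rfl ht'T.2
    have hf1 : ContinuousOn (fun τ => F τ (sol (xs n) (ls n) τ) (ls n)) (Set.Icc 0 t') :=
      hFc.comp_continuousOn (continuousOn_id.prodMk ((hunc.mono hsubT).prodMk continuousOn_const))
    have hf2 : ContinuousOn (fun τ => F τ (sol x₀ l₀ τ) (ls n)) (Set.Icc 0 t') :=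
      hFc.comp_continuousOn (continuousOn_id.prodMk ((hu₀c.mono hsubT).prodMk continuousOn_const))
    have hf3 : ContinuousOn (fun τ => F τ (sol x₀ l₀ τ) l₀) (Set.Icc 0 t') :=
      hFu₀c.mono hsubT
    have hc1 := cont_comp S hsgc hcontr (hls n) ht'0 hf1
    have hc4 := cont_comp S hsgc hcontr hl₀ ht'0 hf3
    have iIntE : ∀ {g : ℝ → E}, ContinuousOn g (Set.Icc 0 t') →
        IntervalIntegrable g volume 0 t' := by
      intro g hg
      apply ContinuousOn.intervalIntegrable
      rwa [uIcc_of_le ht'0]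
    have iIntR : ∀ {g : ℝ → ℝ}, ContinuousOn g (Set.Icc 0 t') →
        IntervalIntegrable g volume 0 t' := by
      intro g hg
      apply ContinuousOn.intervalIntegrable
      rwa [uIcc_of_le ht'0]
    have hun := hmild (xs n) (ls n) (hls n) t' ht'T
    have hu0 := hmild x₀ l₀ hl₀ t' ht'T
    have hdiff : sol (xs n) (ls n) t' - sol x₀ l₀ t' =
        (S (ls n) t' (xs n) - S l₀ t' x₀)
        + ∫ τ in (0:ℝ)..t', (S (ls n) (t' - τ) (F τ (sol (xs n) (ls n) τ) (ls n))
            - S l₀ (t' - τ) (F τ (sol x₀ l₀ τ) l₀)) := by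
      rw [hun, hu0, intervalIntegral.integral_sub (iIntE hc1) (iIntE hc4)]
      abel
    have hApart : ‖S (ls n) t' (xs n) - S l₀ t' x₀‖ < b/4 := by
      have e1 : S (ls n) t' (xs n) - S l₀ t' x₀ =
          S (ls n) t' (xs n - x₀) + (S (ls n) t' x₀ - S l₀ t' x₀) := by
        rw [map_sub]; abel
      calc ‖S (ls n) t' (xs n) - S l₀ t' x₀‖
          ≤ ‖S (ls n) t' (xs n - x₀)‖ + ‖S (ls n) t' x₀ - S l₀ t' x₀‖ := by
            rw [e1]; exact norm_add_le _ _
      _ < b/8 + b/8 := add_lt_add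
            ((hcontr _ (hls n) t' ht'0 _).trans_lt h1a) (h1b t' ht'T)
      _ = b/4 := by ring
    have hptw : ∀ τ ∈ Set.Icc (0:ℝ) t',
        ‖S (ls n) (t' - τ) (F τ (sol (xs n) (ls n) τ) (ls n))
          - S l₀ (t' - τ) (F τ (sol x₀ l₀ τ) l₀)‖
        ≤ Ls * ρ τ + ‖F τ (sol x₀ l₀ τ) (ls n) - F τ (sol x₀ l₀ τ) l₀‖ + b/(4*(T+1)) := by
      intro τ hτ
      have hτT : τ ∈ Set.Icc (0:ℝ) T := hsubT hτ
      have ht'τ : (0:ℝ) ≤ t' - τ := by linarith [hτ.2]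
      have ht'τT : t' - τ ∈ Set.Icc (0:ℝ) T := ⟨ht'τ, by linarith [hτ.1, ht'T.2]⟩
      have hsplit : S (ls n) (t' - τ) (F τ (sol (xs n) (ls n) τ) (ls n))
            - S l₀ (t' - τ) (F τ (sol x₀ l₀ τ) l₀)
          = S (ls n) (t' - τ) (F τ (sol (xs n) (ls n) τ) (ls n) - F τ (sol x₀ l₀ τ) (ls n))
          + S (ls n) (t' - τ) (F τ (sol x₀ l₀ τ) (ls n) - F τ (sol x₀ l₀ τ) l₀)
          + (S (ls n) (t' - τ) (F τ (sol x₀ l₀ τ) l₀)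
              - S l₀ (t' - τ) (F τ (sol x₀ l₀ τ) l₀)) := by
        rw [map_sub, map_sub]; abel
      have hg1 : ‖S (ls n) (t' - τ) (F τ (sol (xs n) (ls n) τ) (ls n)
          - F τ (sol x₀ l₀ τ) (ls n))‖ ≤ Ls * ρ τ := by
        refine (hcontr _ (hls n) _ ht'τ _).trans ?_
        have hball : sol (xs n) (ls n) τ ∈ Metric.ball (sol x₀ l₀ τ) δs := by
          rw [Metric.mem_ball, dist_eq_norm]
          refine lt_of_le_of_lt (hsm τ ⟨hτ.1, hτ.2.trans ht'.2⟩) ?_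
          have : ε₁ ≤ δs := min_le_right _ _
          linarith
        exact hlip (sol x₀ l₀ τ) (mem_image_of_mem _ hτT) _ hball _
          (Metric.mem_ball_self hδs) τ hτT (ls n) (hls n)
      have hg2 : ‖S (ls n) (t' - τ) (F τ (sol x₀ l₀ τ) (ls n) - F τ (sol x₀ l₀ τ) l₀)‖
          ≤ ‖F τ (sol x₀ l₀ τ) (ls n) - F τ (sol x₀ l₀ τ) l₀‖ :=
        hcontr _ (hls n) _ ht'τ _
      have hg3 : ‖S (ls n) (t' - τ) (F τ (sol x₀ l₀ τ) l₀)
          - S l₀ (t' - τ) (F τ (sol x₀ l₀ τ) l₀)‖ ≤ b/(4*(T+1)) :=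
        (h3 (t'-τ) ht'τT _ (mem_image_of_mem _ hτT)).le
      calc ‖S (ls n) (t' - τ) (F τ (sol (xs n) (ls n) τ) (ls n))
            - S l₀ (t' - τ) (F τ (sol x₀ l₀ τ) l₀)‖
          ≤ ‖S (ls n) (t' - τ) (F τ (sol (xs n) (ls n) τ) (ls n) - F τ (sol x₀ l₀ τ) (ls n))‖
          + ‖S (ls n) (t' - τ) (F τ (sol x₀ l₀ τ) (ls n) - F τ (sol x₀ l₀ τ) l₀)‖
          + ‖S (ls n) (t' - τ) (F τ (sol x₀ l₀ τ) l₀)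
              - S l₀ (t' - τ) (F τ (sol x₀ l₀ τ) l₀)‖ := by
            rw [hsplit]; exact norm_add₃_le
      _ ≤ Ls * ρ τ + ‖F τ (sol x₀ l₀ τ) (ls n) - F τ (sol x₀ l₀ τ) l₀‖ + b/(4*(T+1)) :=
            add_le_add (add_le_add hg1 hg2) hg3
    -- integral bound
    have hρInt : IntervalIntegrable ρ volume 0 t' := iIntR (hρc.mono hsubT)
    have hφcont' : ContinuousOn
        (fun τ => ‖F τ (sol x₀ l₀ τ) (ls n) - F τ (sol x₀ l₀ τ) l₀‖) (Set.Icc 0 t') :=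
      (hf2.sub hf3).norm
    have hφInt : IntervalIntegrable
        (fun τ => ‖F τ (sol x₀ l₀ τ) (ls n) - F τ (sol x₀ l₀ τ) l₀‖) volume 0 t' :=
      iIntR hφcont'
    have hIb : ‖∫ τ in (0:ℝ)..t', (S (ls n) (t' - τ) (F τ (sol (xs n) (ls n) τ) (ls n))
        - S l₀ (t' - τ) (F τ (sol x₀ l₀ τ) l₀))‖
        ≤ Ls * (∫ τ in (0:ℝ)..t', ρ τ) + b/4 + b/4 := by
      have hn1 : ‖∫ τ in (0:ℝ)..t', (S (ls n) (t' - τ) (F τ (sol (xs n) (ls n) τ) (ls n))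
          - S l₀ (t' - τ) (F τ (sol x₀ l₀ τ) l₀))‖
          ≤ ∫ τ in (0:ℝ)..t', ‖S (ls n) (t' - τ) (F τ (sol (xs n) (ls n) τ) (ls n))
          - S l₀ (t' - τ) (F τ (sol x₀ l₀ τ) l₀)‖ :=
        intervalIntegral.norm_integral_le_integral_norm ht'0
      have hmono : (∫ τ in (0:ℝ)..t', ‖S (ls n) (t' - τ) (F τ (sol (xs n) (ls n) τ) (ls n))
          - S l₀ (t' - τ) (F τ (sol x₀ l₀ τ) l₀)‖)
          ≤ ∫ τ in (0:ℝ)..t', (Ls * ρ τ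
            + ‖F τ (sol x₀ l₀ τ) (ls n) - F τ (sol x₀ l₀ τ) l₀‖ + b/(4*(T+1))) := by
        apply intervalIntegral.integral_mono_on ht'0
        · exact iIntR (hc1.sub hc4).norm
        · exact (((hρInt.const_mul Ls).add hφInt).add intervalIntegrable_const)
        · exact hptw
      have hsum : (∫ τ in (0:ℝ)..t', (Ls * ρ τ
            + ‖F τ (sol x₀ l₀ τ) (ls n) - F τ (sol x₀ l₀ τ) l₀‖ + b/(4*(T+1))))
          = Ls * (∫ τ in (0:ℝ)..t', ρ τ)
            + (∫ τ in (0:ℝ)..t', ‖F τ (sol x₀ l₀ τ) (ls n) - F τ (sol x₀ l₀ τ) l₀‖)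
            + t' * (b/(4*(T+1))) := by
        rw [intervalIntegral.integral_add ((hρInt.const_mul Ls).add hφInt)
          intervalIntegrable_const,
          intervalIntegral.integral_add (hρInt.const_mul Ls) hφInt,
          intervalIntegral.integral_const_mul, intervalIntegral.integral_const]
        simp [smul_eq_mul]
      have hφle : (∫ τ in (0:ℝ)..t', ‖F τ (sol x₀ l₀ τ) (ls n) - F τ (sol x₀ l₀ τ) l₀‖)
          ≤ ∫ τ in (0:ℝ)..T, ‖F τ (sol x₀ l₀ τ) (ls n) - F τ (sol x₀ l₀ τ) l₀‖ := by
        apply intervalIntegral.integral_mono_interval le_rfl ht'0 ht'T.2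
        · filter_upwards with τ; exact norm_nonneg _
        · apply ContinuousOn.intervalIntegrable
          rw [uIcc_of_le hT.le]
          exact (((hFc.comp_continuousOn (continuousOn_id.prodMk
            (hu₀c.prodMk continuousOn_const))).sub hFu₀c).norm)
      have hconst : t' * (b/(4*(T+1))) ≤ b/4 := by
        have hkey : (T+1) * (b / (4*(T+1))) = b/4 := by
          field_simp
        have h1 : t' * (b/(4*(T+1))) ≤ (T+1) * (b/(4*(T+1))) :=
          mul_le_mul_of_nonneg_right (by linarith [ht'T.2]) (by positivity)
        linarith
      calc ‖∫ τ in (0:ℝ)..t', (S (ls n) (t' - τ) (F τ (sol (xs n) (ls n) τ) (ls n))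
          - S l₀ (t' - τ) (F τ (sol x₀ l₀ τ) l₀))‖
          ≤ Ls * (∫ τ in (0:ℝ)..t', ρ τ)
            + (∫ τ in (0:ℝ)..t', ‖F τ (sol x₀ l₀ τ) (ls n) - F τ (sol x₀ l₀ τ) l₀‖)
            + t' * (b/(4*(T+1))) := by
            rw [← hsum]; exact hn1.trans hmono
      _ ≤ Ls * (∫ τ in (0:ℝ)..t', ρ τ) + b/4 + b/4 :=
            add_le_add (add_le_add le_rfl (hφle.trans h2.le)) hconst
    calc ρ t' = ‖sol (xs n) (ls n) t' - sol x₀ l₀ t'‖ := rfl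
    _ ≤ ‖S (ls n) t' (xs n) - S l₀ t' x₀‖
        + ‖∫ τ in (0:ℝ)..t', (S (ls n) (t' - τ) (F τ (sol (xs n) (ls n) τ) (ls n))
            - S l₀ (t' - τ) (F τ (sol x₀ l₀ τ) l₀))‖ := by
          rw [hdiff]; exact norm_add_le _ _
    _ ≤ b/4 + (Ls * (∫ τ in (0:ℝ)..t', ρ τ) + b/4 + b/4) := add_le_add hApart.le hIb
    _ = 3*b/4 + Ls * ∫ τ in (0:ℝ)..t', ρ τ := by ring
  -- initial smallness
  have h0ρ : ρ 0 ≤ ε₁/2 := by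
    have hsol0 : ∀ (x : E) (l : ℝ), l ∈ Set.Icc (0:ℝ) 1 → sol x l 0 = x := by
      intro x l hl
      have := hmild x l hl 0 (left_mem_Icc.2 hT.le)
      rw [intervalIntegral.integral_same, add_zero, hsg1 l hl] at this
      simpa using this
    have : ρ 0 = ‖xs n - x₀‖ := by
      rw [hρdef]
      simp only [hsol0 (xs n) (ls n) (hls n), hsol0 x₀ l₀ hl₀]
    rw [this]
    have hb8 : b/8 ≤ ε₁/2 := by linarith
    linarith [h1a]
  -- bootstrap
  set Q : Set ℝ := {τ | τ ∈ Set.Icc (0:ℝ) T ∧ ∀ σ ∈ Set.Icc (0:ℝ) τ, ρ σ ≤ ε₁/2}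
    with hQdef
  have h0Q : (0:ℝ) ∈ Q := by
    refine ⟨left_mem_Icc.2 hT.le, ?_⟩
    intro σ hσ
    have : σ = 0 := le_antisymm hσ.2 hσ.1
    rw [this]; exact h0ρ
  have hQbdd : BddAbove Q := ⟨T, fun τ hτ => hτ.1.2⟩
  have hQne : Q.Nonempty := ⟨0, h0Q⟩
  set t₁ : ℝ := sSup Q with ht₁def
  have ht₁0 : 0 ≤ t₁ := le_csSup hQbdd h0Q
  have ht₁T : t₁ ≤ T := csSup_le hQne (fun τ hτ => hτ.1.2)
  have hQt₁ : ∀ τ ∈ Set.Icc (0:ℝ) t₁, ρ τ ≤ ε₁/2 := by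
    intro τ hτ
    rcases lt_or_eq_of_le hτ.2 with hlt | heq
    · obtain ⟨q, hqQ, hq⟩ := exists_lt_of_lt_csSup hQne hlt
      exact hqQ.2 τ ⟨hτ.1, hq.le⟩
    · rcases eq_or_lt_of_le ht₁0 with h0t₁ | h0t₁
      · rw [heq, ← h0t₁]; exact h0ρ
      · have hNe : (𝓝[Ico (0:ℝ) t₁] t₁).NeBot := by
          rw [← mem_closure_iff_nhdsWithin_neBot, closure_Ico (ne_of_lt h0t₁)]
          exact right_mem_Icc.2 ht₁0
        have hcw : Filter.Tendsto ρ (𝓝[Ico (0:ℝ) t₁] t₁) (𝓝 (ρ t₁)) :=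
          (hρc t₁ ⟨ht₁0, ht₁T⟩).mono_left
            (nhdsWithin_mono _ (fun σ hσ => ⟨hσ.1, hσ.2.le.trans ht₁T⟩))
        rw [heq]
        apply le_of_tendsto hcw
        filter_upwards [eventually_mem_nhdsWithin] with σ hσ
        obtain ⟨q, hqQ, hq⟩ := exists_lt_of_lt_csSup hQne hσ.2
        exact hqQ.2 σ ⟨hσ.1, hq.le⟩
  have hgron : ∀ t' ∈ Set.Icc (0:ℝ) t₁, ρ t' ≤ (3*b/4) * Real.exp (Ls * t') :=
    gronwall_int ht₁0 hLs.le (hρc.mono (Icc_subset_Icc le_rfl ht₁T))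
      (hcore t₁ ⟨ht₁0, ht₁T⟩ hQt₁)
  have hgron' : ∀ t' ∈ Set.Icc (0:ℝ) t₁, ρ t' ≤ 3*ε₁/16 := by
    intro t' ht'
    have hexp : Real.exp (Ls * t') ≤ Cg := by
      rw [hCgdef]
      exact Real.exp_le_exp.2 (mul_le_mul_of_nonneg_left (ht'.2.trans ht₁T) hLs.le)
    calc ρ t' ≤ (3*b/4) * Real.exp (Ls * t') := hgron t' ht'
    _ ≤ (3*b/4) * Cg := mul_le_mul_of_nonneg_left hexp (by positivity)
    _ = 3*ε₁/16 := by
        rw [hbdef]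
        field_simp
        ring
  have ht₁eq : t₁ = T := by
    by_contra hne'
    have ht₁lt : t₁ < T := lt_of_le_of_ne ht₁T hne'
    have hρt₁ : ρ t₁ < ε₁/2 :=
      lt_of_le_of_lt (hgron' t₁ (right_mem_Icc.2 ht₁0)) (by linarith)
    have hcw : Filter.Tendsto ρ (𝓝[Set.Icc (0:ℝ) T] t₁) (𝓝 (ρ t₁)) :=
      hρc t₁ ⟨ht₁0, ht₁T⟩
    have hev' : ∀ᶠ σ in 𝓝[Set.Icc (0:ℝ) T] t₁, ρ σ < ε₁/2 :=
      hcw.eventually (eventually_lt_nhds hρt₁)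
    obtain ⟨d, hd, hdsub⟩ := Metric.mem_nhdsWithin_iff.1 hev'
    set t₂ : ℝ := min T (t₁ + d/2) with ht₂def
    have ht₂gt : t₁ < t₂ := lt_min ht₁lt (by linarith)
    have ht₂mem : t₂ ∈ Set.Icc (0:ℝ) T := ⟨le_trans ht₁0 ht₂gt.le, min_le_left _ _⟩
    have ht₂Q : t₂ ∈ Q := by
      refine ⟨ht₂mem, ?_⟩
      intro σ hσ
      rcases le_or_gt σ t₁ with h | h
      · exact hQt₁ σ ⟨hσ.1, h⟩
      · have hσT : σ ∈ Set.Icc (0:ℝ) T := ⟨hσ.1, hσ.2.trans ht₂mem.2⟩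
        have hdist : σ ∈ Metric.ball t₁ d := by
          rw [Metric.mem_ball, Real.dist_eq, abs_of_nonneg (by linarith)]
          have : σ ≤ t₁ + d/2 := hσ.2.trans (min_le_right _ _)
          linarith
        exact (hdsub ⟨hdist, hσT⟩).le
    have := le_csSup hQbdd ht₂Q
    linarith
  calc dist (sol x₀ l₀ t) (sol (xs n) (ls n) t) = ρ t := by
        rw [hρdef, dist_eq_norm, norm_sub_rev]
  _ ≤ 3*ε₁/16 := hgron' t (by rw [ht₁eq]; exact ht)
  _ < ε := by
      have : ε₁ ≤ ε := min_le_left _ _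
      linarith
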